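/- arXiv:1210.0524 — 2 statements merged into one kernel-verified Lean document; each statement's English description precedes it below -/
import Mathlib

section
/- For any finite graph G, the game domination number and Staller-start game domination number differ by at most one: |γ_g(G) − γ_g'(G)| ≤ 1. -/
open Finset

namespace DomGame

variable {V : Type*} [Fintype V] [DecidableEq V]

/-- Closed neighborhood of `v` in `G`, as a `Finset`. -/
noncomputable def cn (G : SimpleGraph V) (v : V) : Finset V :=
  haveI : DecidablePred (fun u : V => u = v ∨ G.Adj v u) := fun _ => Classical.propDecidable _
  Finset.univ.filter (fun u : V => u = v ∨ G.Adj v u)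

/-- Value (number of remaining moves, optimal play) of the domination game on `G`,
with fuel, where `D` is the set of already dominated vertices and `who = true`
means Dominator is to move (minimizing); `who = false` means Staller (maximizing). -/
noncomputable def auxVal (G : SimpleGraph V) : ℕ → Bool → Finset V → ℕ
  | 0, _, _ => 0
  | n + 1, who, D =>
    if D = Finset.univ then 0
    else
      haveI : DecidablePred (fun v : V => ¬ cn G v ⊆ D) := fun _ => Classical.propDecidable _
      let moves : Finset V := Finset.univ.filter (fun v : V => ¬ cn G v ⊆ D)
      if who then
        WithTop.untopD 0 ((moves.image (fun v => 1 + auxVal G n false (D ∪ cn G v))).min)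
      else
        moves.sup (fun v => 1 + auxVal G n true (D ∪ cn G v))

/-- Remaining moves of the domination game on the partially dominated graph `(G, D)`,
Dominator to move, both players optimal. -/
noncomputable def gVal (G : SimpleGraph V) (D : Finset V) : ℕ :=
  auxVal G (Fintype.card V) true D

/-- Remaining moves, Staller to move. -/
noncomputable def gVal' (G : SimpleGraph V) (D : Finset V) : ℕ :=
  auxVal G (Fintype.card V) false D

/-- The game domination number (Dominator starts). -/
noncomputable def gammaG (G : SimpleGraph V) : ℕ := gVal G ∅

/-- The Staller-start game domination number. -/
noncomputable def gammaG' (G : SimpleGraph V) : ℕ := gVal' G ∅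

/-- `S` is a dominating set of `G`. -/
def IsDomSet (G : SimpleGraph V) (S : Finset V) : Prop :=
  ∀ v : V, ∃ u ∈ S, u = v ∨ G.Adj u v

/-- The domination number of `G`. -/
noncomputable def gamma (G : SimpleGraph V) : ℕ :=
  sInf {n | ∃ S : Finset V, IsDomSet G S ∧ S.card = n}

set_option linter.unusedSectionVars false

lemma auxVal_succ (G : SimpleGraph V) (n : ℕ) (who : Bool) (D : Finset V) :
    auxVal G (n+1) who D =
      if D = Finset.univ then 0
      else
        haveI : DecidablePred (fun v : V => ¬ cn G v ⊆ D) := fun _ => Classical.propDecidable _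
        let moves : Finset V := Finset.univ.filter (fun v : V => ¬ cn G v ⊆ D)
        if who then
          WithTop.untopD 0 ((moves.image (fun v => 1 + auxVal G n false (D ∪ cn G v))).min)
        else
          moves.sup (fun v => 1 + auxVal G n true (D ∪ cn G v)) := by
  rw [auxVal]

lemma mem_cn_self (G : SimpleGraph V) (v : V) : v ∈ cn G v := by
  simp [cn]

lemma aux_univ (G : SimpleGraph V) (n : ℕ) (who : Bool) :
    auxVal G n who (Finset.univ : Finset V) = 0 := by
  cases n with
  | zero => rw [auxVal]
  | succ n => rw [auxVal_succ]; simp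

set_option linter.unusedSectionVars false

lemma untop'_min_le {s : Finset ℕ} {a : ℕ} (h : a ∈ s) : WithTop.untopD 0 s.min ≤ a := by
  obtain ⟨b, hb⟩ := Finset.min_of_mem h
  have h2 : s.min ≤ (a : WithTop ℕ) := Finset.min_le h
  rw [hb] at h2 ⊢
  rw [WithTop.untopD_coe]
  exact WithTop.coe_le_coe.mp h2

lemma untop'_min_mem {s : Finset ℕ} (hs : s.Nonempty) : WithTop.untopD 0 s.min ∈ s := by
  obtain ⟨a, ha⟩ := hs
  obtain ⟨b, hb⟩ := Finset.min_of_mem ha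
  rw [hb, WithTop.untopD_coe]
  exact Finset.mem_of_min hb

lemma moves_nonempty (G : SimpleGraph V) {D : Finset V} (hD : D ≠ Finset.univ) :
    (@Finset.filter V (fun v : V => ¬ cn G v ⊆ D)
      (fun _ => Classical.propDecidable _) Finset.univ).Nonempty := by
  have : ¬ (Finset.univ : Finset V) ⊆ D := fun h => hD (Finset.eq_univ_iff_forall.mpr
    (fun v => h (Finset.mem_univ v)))
  obtain ⟨v, _, hv⟩ := Finset.not_subset.mp this
  refine ⟨v, ?_⟩
  simp only [Finset.mem_filter]
  exact ⟨Finset.mem_univ v, fun hsub => hv (hsub (mem_cn_self G v))⟩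

lemma aux_fuel (G : SimpleGraph V) :
    ∀ n m (D : Finset V) (who : Bool), (Finset.univ \ D).card ≤ n →
      (Finset.univ \ D).card ≤ m → auxVal G n who D = auxVal G m who D := by
  intro n
  induction n using Nat.strong_induction_on with
  | _ n ih =>
  intro m D who hn hm
  by_cases hD : D = Finset.univ
  · subst hD; rw [aux_univ, aux_univ]
  · have hne : (Finset.univ \ D).Nonempty := by
      rw [Finset.sdiff_nonempty]
      exact fun h => hD (Finset.eq_univ_iff_forall.mpr (fun v => h (Finset.mem_univ v)))
    have h1 : 1 ≤ (Finset.univ \ D).card := Finset.card_pos.mpr hne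
    obtain ⟨n', rfl⟩ : ∃ n', n = n' + 1 := ⟨n - 1, by omega⟩
    obtain ⟨m', rfl⟩ : ∃ m', m = m' + 1 := ⟨m - 1, by omega⟩
    rw [auxVal_succ, auxVal_succ]
    simp only [if_neg hD]
    have key : ∀ v : V, ¬ cn G v ⊆ D → ∀ w : Bool,
        auxVal G n' w (D ∪ cn G v) = auxVal G m' w (D ∪ cn G v) := by
      intro v hv w
      have hlt : (Finset.univ \ (D ∪ cn G v)).card < (Finset.univ \ D).card := by
        apply Finset.card_lt_card
        constructor
        · exact Finset.sdiff_subset_sdiff (le_refl _) Finset.subset_union_left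
        · intro hsub
          obtain ⟨u, hu, hunotD⟩ := Finset.not_subset.mp hv
          have h3 : u ∈ Finset.univ \ D := Finset.mem_sdiff.mpr ⟨Finset.mem_univ u, hunotD⟩
          have h4 := hsub h3
          rw [Finset.mem_sdiff, Finset.mem_union] at h4
          exact h4.2 (Or.inr hu)
      exact ih n' (by omega) m' _ w (by omega) (by omega)
    cases who with
    | true =>
      simp only [if_true]
      refine congrArg (fun t : Finset ℕ => WithTop.untopD 0 t.min) (Finset.image_congr ?_)
      intro v hv
      simp only [Finset.coe_filter, Set.mem_setOf_eq] at hv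
      show 1 + auxVal G n' false (D ∪ cn G v) = 1 + auxVal G m' false (D ∪ cn G v)
      rw [key v hv.2 false]
    | false =>
      simp only [Bool.false_eq_true, if_false]
      refine Finset.sup_congr rfl (fun v hv => ?_)
      simp only [Finset.mem_filter] at hv
      rw [key v hv.2 true]

lemma aux_mono (G : SimpleGraph V) :
    ∀ n (who : Bool) (D D' : Finset V), D ⊆ D' →
      auxVal G n who D' ≤ auxVal G n who D := by
  intro n
  induction n with
  | zero => intro who D D' _; rw [auxVal, auxVal]
  | succ n ih =>
    intro who D D' hsub
    by_cases hD' : D' = Finset.univ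
    · subst hD'; rw [aux_univ]; exact Nat.zero_le _
    have hD : D ≠ Finset.univ := by
      intro h; exact hD' (Finset.eq_univ_iff_forall.mpr (fun v => hsub (h ▸ Finset.mem_univ v)))
    rw [auxVal_succ, auxVal_succ]
    simp only [if_neg hD, if_neg hD']
    cases who with
    | true =>
      simp only [if_true]
      -- RHS min attained at some v*
      have hne : ((@Finset.filter V (fun v : V => ¬ cn G v ⊆ D)
          (fun _ => Classical.propDecidable _) Finset.univ).image
            (fun v => 1 + auxVal G n false (D ∪ cn G v))).Nonempty :=
        (moves_nonempty G hD).image _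
      have hmem := untop'_min_mem hne
      rw [Finset.mem_image] at hmem
      obtain ⟨vs, hvs, hval⟩ := hmem
      simp only [Finset.mem_filter] at hvs
      rw [← hval]
      by_cases hleg : ¬ cn G vs ⊆ D'
      · -- vs legal from D' too
        have hmem' : (1 + auxVal G n false (D' ∪ cn G vs)) ∈
            ((@Finset.filter V (fun v : V => ¬ cn G v ⊆ D')
              (fun _ => Classical.propDecidable _) Finset.univ).image
                (fun v => 1 + auxVal G n false (D' ∪ cn G v))) := by
          refine Finset.mem_image_of_mem _ ?_
          simp only [Finset.mem_filter]
          exact ⟨Finset.mem_univ vs, hleg⟩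
        refine (untop'_min_le hmem').trans ?_
        have := ih false (D ∪ cn G vs) (D' ∪ cn G vs) (Finset.union_subset_union hsub le_rfl)
        omega
      · -- cn vs ⊆ D'; pick any legal move from D'
        push_neg at hleg
        obtain ⟨v0, hv0⟩ := moves_nonempty G hD'
        have hv0' := hv0
        simp only [Finset.mem_filter] at hv0'
        have hmem' : (1 + auxVal G n false (D' ∪ cn G v0)) ∈
            ((@Finset.filter V (fun v : V => ¬ cn G v ⊆ D')
              (fun _ => Classical.propDecidable _) Finset.univ).image
                (fun v => 1 + auxVal G n false (D' ∪ cn G v))) :=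
          Finset.mem_image_of_mem _ hv0
        refine (untop'_min_le hmem').trans ?_
        have h5 : auxVal G n false (D' ∪ cn G v0) ≤ auxVal G n false D' :=
          ih false D' (D' ∪ cn G v0) Finset.subset_union_left
        have h6 : auxVal G n false D' ≤ auxVal G n false (D ∪ cn G vs) :=
          ih false (D ∪ cn G vs) D' (Finset.union_subset hsub hleg)
        omega
    | false =>
      simp only [Bool.false_eq_true, if_false]
      apply Finset.sup_le
      intro v hv
      simp only [Finset.mem_filter] at hv
      have hvD : ¬ cn G v ⊆ D := fun h => hv.2 (h.trans hsub)
      have hmem : v ∈ (@Finset.filter V (fun v : V => ¬ cn G v ⊆ D)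
          (fun _ => Classical.propDecidable _) Finset.univ) := by
        simp only [Finset.mem_filter]; exact ⟨Finset.mem_univ v, hvD⟩
      refine le_trans ?_ (Finset.le_sup hmem)
      have := ih true (D ∪ cn G v) (D' ∪ cn G v) (Finset.union_subset_union hsub le_rfl)
      omega

lemma compl_card_lt (G : SimpleGraph V) (v : V) :
    (Finset.univ \ ((∅ : Finset V) ∪ cn G v)).card < Fintype.card V := by
  have hsub : Finset.univ \ ((∅ : Finset V) ∪ cn G v) ⊆ Finset.univ \ {v} :=
    Finset.sdiff_subset_sdiff le_rfl
      (Finset.singleton_subset_iff.mpr (Finset.mem_union_right _ (mem_cn_self G v)))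
  have hc : (Finset.univ \ ({v} : Finset V)).card = Fintype.card V - 1 := by
    rw [Finset.card_sdiff_of_subset (Finset.subset_univ _), Finset.card_univ, Finset.card_singleton]
  have hpos : 0 < Fintype.card V := Fintype.card_pos_iff.mpr ⟨v⟩
  have := Finset.card_le_card hsub
  omega

lemma main_ineqs (G : SimpleGraph V) :
    gammaG G ≤ gammaG' G + 1 ∧ gammaG' G ≤ gammaG G + 1 := by
  by_cases hV : Fintype.card V = 0
  · have h0 : gammaG G = 0 := by
      unfold gammaG gVal; rw [hV, auxVal]
    have h0' : gammaG' G = 0 := by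
      unfold gammaG' gVal'; rw [hV, auxVal]
    omega
  obtain ⟨m, hm⟩ : ∃ m, Fintype.card V = m + 1 := ⟨Fintype.card V - 1, by omega⟩
  have hE : (∅ : Finset V) ≠ Finset.univ := by
    intro h
    have := Finset.card_univ (α := V)
    rw [← h, Finset.card_empty] at this
    omega
  have hG : gammaG G = auxVal G (m+1) true ∅ := by unfold gammaG gVal; rw [hm]
  have hG' : gammaG' G = auxVal G (m+1) false ∅ := by unfold gammaG' gVal'; rw [hm]
  have hfuel : ∀ (v : V) (w : Bool),
      auxVal G m w ((∅ : Finset V) ∪ cn G v) = auxVal G (m+1) w ((∅ : Finset V) ∪ cn G v) := by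
    intro v w
    have := compl_card_lt G v
    exact aux_fuel G m (m+1) _ w (by omega) (by omega)
  obtain ⟨v0, hv0⟩ := moves_nonempty G hE
  constructor
  · -- gammaG ≤ gammaG' + 1
    rw [hG, auxVal_succ]
    simp only [if_neg hE, if_true]
    have hmem : (1 + auxVal G m false ((∅ : Finset V) ∪ cn G v0)) ∈
        ((@Finset.filter V (fun v : V => ¬ cn G v ⊆ (∅ : Finset V))
          (fun _ => Classical.propDecidable _) Finset.univ).image
            (fun v => 1 + auxVal G m false ((∅ : Finset V) ∪ cn G v))) :=
      Finset.mem_image_of_mem _ hv0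
    refine (untop'_min_le hmem).trans ?_
    rw [hG', hfuel v0 false]
    have := aux_mono G (m+1) false ∅ ((∅ : Finset V) ∪ cn G v0) (Finset.empty_subset _)
    omega
  · -- gammaG' ≤ gammaG + 1
    rw [hG', auxVal_succ]
    simp only [if_neg hE, Bool.false_eq_true, if_false]
    obtain ⟨v1, hv1, hsupeq⟩ := Finset.exists_mem_eq_sup _ (moves_nonempty G hE)
      (fun v => 1 + auxVal G m true ((∅ : Finset V) ∪ cn G v))
    rw [hsupeq, hG, hfuel v1 true]
    have := aux_mono G (m+1) true ∅ ((∅ : Finset V) ∪ cn G v1) (Finset.empty_subset _)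
    omega

end DomGame

/-- |γ_g(G) − γ_g'(G)| ≤ 1. -/
theorem stmt1 {V : Type*} [Fintype V] [DecidableEq V] (G : SimpleGraph V) :
    |(DomGame.gammaG G : ℤ) - (DomGame.gammaG' G : ℤ)| ≤ 1 := by
  obtain ⟨h1, h2⟩ := DomGame.main_ineqs G
  rw [abs_sub_le_iff]
  exact ⟨by omega, by omega⟩
end

section
/- No tree T satisfies γ_g(T) = 3 and γ_g'(T) = 2. -/
open Finset

set_option linter.unusedSectionVars false
namespace DomGame
variable {V : Type*} [Fintype V] [DecidableEq V] (G : SimpleGraph V)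

lemma mem_cn {u v : V} : u ∈ cn G v ↔ u = v ∨ G.Adj v u := by
  classical
  simp [cn]

lemma self_mem_cn (v : V) : v ∈ cn G v := (mem_cn G).2 (Or.inl rfl)

lemma not_cn_subset {D : Finset V} {v : V} (hv : v ∉ D) : ¬ cn G v ⊆ D :=
  fun h => hv (h (self_mem_cn G v))

lemma auxVal_univ (n : ℕ) (who : Bool) : auxVal G n who Finset.univ = 0 := by
  cases n <;> simp [auxVal]

lemma exists_not_mem' {D : Finset V} (hD : D ≠ Finset.univ) : ∃ v, v ∉ D := by
  by_contra h
  push_neg at h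
  exact hD (Finset.eq_univ_iff_forall.2 h)

lemma auxVal_true_eq {D : Finset V} (hD : D ≠ Finset.univ) (n : ℕ) :
    ∃ v, ¬ cn G v ⊆ D ∧ auxVal G (n+1) true D = 1 + auxVal G n false (D ∪ cn G v) ∧
      ∀ w, ¬ cn G w ⊆ D → auxVal G (n+1) true D ≤ 1 + auxVal G n false (D ∪ cn G w) := by
  classical
  obtain ⟨v0, hv0⟩ := exists_not_mem' hD
  letI : DecidablePred (fun v : V => ¬ cn G v ⊆ D) := fun _ => Classical.propDecidable _
  have hval : auxVal G (n+1) true D = WithTop.untopD 0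
      (((Finset.univ.filter (fun v : V => ¬ cn G v ⊆ D)).image
        (fun v => 1 + auxVal G n false (D ∪ cn G v))).min) := by
    simp only [auxVal, if_neg hD, if_true, Finset.filter_congr_decidable]
  have hne : ((Finset.univ.filter (fun v : V => ¬ cn G v ⊆ D)).image
        (fun v => 1 + auxVal G n false (D ∪ cn G v))).Nonempty :=
    Finset.Nonempty.image ⟨v0, Finset.mem_filter.2 ⟨Finset.mem_univ v0, not_cn_subset G hv0⟩⟩ _
  have hmin : auxVal G (n+1) true D = ((Finset.univ.filter (fun v : V => ¬ cn G v ⊆ D)).image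
        (fun v => 1 + auxVal G n false (D ∪ cn G v))).min' hne := by
    rw [hval, ← Finset.coe_min', WithTop.untopD_coe]
  obtain ⟨v, hv, hveq⟩ := Finset.mem_image.1 (Finset.min'_mem _ hne)
  refine ⟨v, (Finset.mem_filter.1 hv).2, by rw [hmin, hveq], ?_⟩
  intro w hw
  rw [hmin]
  exact Finset.min'_le _ _ (Finset.mem_image_of_mem _ (Finset.mem_filter.2 ⟨Finset.mem_univ w, hw⟩))

lemma le_auxVal_false {D : Finset V} (hD : D ≠ Finset.univ) {v : V} (hv : ¬ cn G v ⊆ D) (n : ℕ) :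
    1 + auxVal G n true (D ∪ cn G v) ≤ auxVal G (n+1) false D := by
  classical
  letI : DecidablePred (fun v : V => ¬ cn G v ⊆ D) := fun _ => Classical.propDecidable _
  have hval : auxVal G (n+1) false D = (Finset.univ.filter (fun v : V => ¬ cn G v ⊆ D)).sup
      (fun v => 1 + auxVal G n true (D ∪ cn G v)) := by
    simp only [auxVal, if_neg hD, Bool.false_eq_true, if_false, Finset.filter_congr_decidable]
  rw [hval]
  exact Finset.le_sup (f := fun v => 1 + auxVal G n true (D ∪ cn G v))
    (by simp only [Finset.mem_filter, Finset.mem_univ, true_and]; exact hv)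

lemma auxVal_false_le {D : Finset V} {n c : ℕ}
    (h : ∀ v, ¬ cn G v ⊆ D → 1 + auxVal G n true (D ∪ cn G v) ≤ c) :
    auxVal G (n+1) false D ≤ c := by
  classical
  by_cases hD : D = Finset.univ
  · simp [auxVal, hD]
  letI : DecidablePred (fun v : V => ¬ cn G v ⊆ D) := fun _ => Classical.propDecidable _
  have hval : auxVal G (n+1) false D = (Finset.univ.filter (fun v : V => ¬ cn G v ⊆ D)).sup
      (fun v => 1 + auxVal G n true (D ∪ cn G v)) := by
    simp only [auxVal, if_neg hD, Bool.false_eq_true, if_false, Finset.filter_congr_decidable]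
  rw [hval]
  exact Finset.sup_le fun v hv => h v (Finset.mem_filter.1 hv).2

lemma auxVal_pos {D : Finset V} (hD : D ≠ Finset.univ) (n : ℕ) (who : Bool) :
    1 ≤ auxVal G (n+1) who D := by
  obtain ⟨v, hv⟩ := exists_not_mem' hD
  cases who
  · exact le_trans (Nat.le_add_right 1 _) (le_auxVal_false G hD (not_cn_subset G hv) n)
  · obtain ⟨w, hw, heq, -⟩ := auxVal_true_eq G hD n
    omega

end DomGame

section GraphLemmas
variable {V : Type*} [Fintype V] [DecidableEq V]

lemma tree_no_triangle {T : SimpleGraph V} (hT : T.IsTree) {a b c : V}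
    (hab : T.Adj a b) (hbc : T.Adj b c) (hac : T.Adj a c) : False := by
  have key := (hT.existsUnique_path a b).unique
      (y₁ := SimpleGraph.Walk.cons hab SimpleGraph.Walk.nil)
      (y₂ := SimpleGraph.Walk.cons hac (SimpleGraph.Walk.cons hbc.symm SimpleGraph.Walk.nil))
      (by simp [hab.ne]) (by simp [hab.ne, hac.ne, hbc.ne'])
  simpa using congrArg SimpleGraph.Walk.length key

lemma tree_no_c4 {T : SimpleGraph V} (hT : T.IsTree) {a b c d : V} (hac : a ≠ c) (hbd : b ≠ d)
    (hab : T.Adj a b) (hbc : T.Adj b c) (had : T.Adj a d) (hdc : T.Adj d c) : False := by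
  have key := (hT.existsUnique_path a c).unique
      (y₁ := SimpleGraph.Walk.cons hab (SimpleGraph.Walk.cons hbc SimpleGraph.Walk.nil))
      (y₂ := SimpleGraph.Walk.cons had (SimpleGraph.Walk.cons hdc SimpleGraph.Walk.nil))
      (by simp [hab.ne, hbc.ne, hac]) (by simp [had.ne, hdc.ne, hac])
  have := congrArg SimpleGraph.Walk.support key
  simp at this
  exact hbd this

lemma tree_exists_leaf (T : SimpleGraph V) (hT : T.IsTree) (h2 : 2 ≤ Fintype.card V) :
    ∃ ℓ s : V, T.Adj s ℓ ∧ ∀ x, T.Adj x ℓ → x = s := by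
  classical
  have hdeg : ∀ v : V, 0 < T.degree v := by
    intro v
    rw [T.degree_pos_iff_exists_adj]
    obtain ⟨y, hy⟩ := Fintype.exists_ne_of_one_lt_card (by omega) v
    obtain ⟨p⟩ := hT.isConnected.preconnected v y
    cases p with
    | nil => exact absurd rfl hy.symm
    | cons h q => exact ⟨_, h⟩
  obtain ⟨v, hv⟩ : ∃ v : V, T.degree v = 1 := by
    by_contra hno
    push_neg at hno
    have hge : ∀ v : V, 2 ≤ T.degree v := fun v => by
      have h1 := hdeg v; have h2 := hno v; omega
    have hsum := T.sum_degrees_eq_twice_card_edges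
    have hcard := hT.card_edgeFinset
    have hle : 2 * Fintype.card V ≤ ∑ v, T.degree v := by
      calc 2 * Fintype.card V = ∑ _v : V, 2 := by
            simp [Finset.sum_const, Finset.card_univ, mul_comm]
        _ ≤ ∑ v, T.degree v := Finset.sum_le_sum fun i _ => hge i
    omega
  have hv' : (T.neighborFinset v).card = 1 := hv
  obtain ⟨s, hs⟩ := Finset.card_eq_one.1 hv'
  refine ⟨v, s, ?_, ?_⟩
  · have : s ∈ T.neighborFinset v := by rw [hs]; exact Finset.mem_singleton_self s
    exact (T.mem_neighborFinset v s).1 this |>.symm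
  · intro x hx
    have : x ∈ T.neighborFinset v := (T.mem_neighborFinset v x).2 hx.symm
    rw [hs] at this
    exact Finset.mem_singleton.1 this

end GraphLemmas

/-- no tree realizes the pair (3, 2). -/
theorem stmt8 {V : Type*} [Fintype V] [DecidableEq V] (T : SimpleGraph V)
    (hT : T.IsTree) :
    ¬ (DomGame.gammaG T = 3 ∧ DomGame.gammaG' T = 2) := by
  classical
  rintro ⟨hG, hG'⟩
  rw [DomGame.gammaG, DomGame.gVal] at hG
  rw [DomGame.gammaG', DomGame.gVal'] at hG'
  rcases Nat.eq_zero_or_pos (Fintype.card V) with h0 | hpos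
  · rw [h0] at hG; simp [DomGame.auxVal] at hG
  have hne : (∅ : Finset V) ≠ Finset.univ := by
    intro h
    have hcu : (Finset.univ : Finset V).card = Fintype.card V := Finset.card_univ
    rw [← h] at hcu
    simp at hcu
    omega
  -- no universal vertex
  have NU : ∀ x : V, DomGame.cn T x ≠ Finset.univ := by
    intro x hx
    obtain ⟨m, hm⟩ : ∃ m, Fintype.card V = m + 1 := ⟨_, (Nat.succ_pred_eq_of_pos hpos).symm⟩
    have hG2 : DomGame.auxVal T (m + 1) true ∅ = 3 := by rw [← hm]; exact hG
    obtain ⟨v, hv, heq, hle⟩ := DomGame.auxVal_true_eq T hne m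
    have h1 := hle x (DomGame.not_cn_subset T (Finset.notMem_empty x))
    rw [Finset.empty_union, hx, DomGame.auxVal_univ] at h1
    omega
  -- at least 3 vertices
  have h3 : 3 ≤ Fintype.card V := by
    obtain ⟨v⟩ : Nonempty V := Fintype.card_pos_iff.1 hpos
    obtain ⟨y, hy⟩ := DomGame.exists_not_mem' (NU v)
    have hyv : y ≠ v := fun h => hy (h ▸ DomGame.self_mem_cn T v)
    have hadvy : ¬ T.Adj v y := fun h => hy ((DomGame.mem_cn T).2 (Or.inr h))
    obtain ⟨p⟩ := hT.isConnected.preconnected v y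
    cases p with
    | nil => exact absurd rfl hyv.symm
    | @cons _ mid _ h q =>
      have hmv : mid ≠ v := h.ne'
      have hmy : mid ≠ y := fun hh => hadvy (hh ▸ h)
      have hcard : ({v, mid, y} : Finset V).card = 3 :=
        Finset.card_eq_three.2 ⟨v, mid, y, hmv.symm, hyv.symm, hmy, rfl⟩
      calc 3 = ({v, mid, y} : Finset V).card := hcard.symm
        _ ≤ (Finset.univ : Finset V).card := Finset.card_le_univ _
        _ = Fintype.card V := Finset.card_univ
  obtain ⟨k, hk⟩ : ∃ k, Fintype.card V = k + 3 := ⟨Fintype.card V - 3, by omega⟩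
  have hG2 : DomGame.auxVal T ((k+2) + 1) true ∅ = 3 := by rw [show (k+2)+1 = k+3 from rfl, ← hk]; exact hG
  have hG'2 : DomGame.auxVal T ((k+2) + 1) false ∅ = 2 := by rw [show (k+2)+1 = k+3 from rfl, ← hk]; exact hG'
  -- Property A: every vertex lies in a dominating pair
  have A : ∀ v : V, ∃ u : V, DomGame.cn T v ∪ DomGame.cn T u = Finset.univ := by
    intro v
    by_cases hcv : DomGame.cn T v = Finset.univ
    · exact ⟨v, by rw [hcv]; simp⟩
    have hle := DomGame.le_auxVal_false T hne (DomGame.not_cn_subset T (Finset.notMem_empty v)) (k+2)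
    rw [hG'2, Finset.empty_union] at hle
    have h1 : DomGame.auxVal T ((k+1)+1) true (DomGame.cn T v) ≤ 1 := by
      have : DomGame.auxVal T (k+2) true (DomGame.cn T v) ≤ 1 := by omega
      exact this
    obtain ⟨u, hu, heq, -⟩ := DomGame.auxVal_true_eq T hcv (k+1)
    rw [heq] at h1
    refine ⟨u, ?_⟩
    by_contra hun
    have := DomGame.auxVal_pos T hun k false
    omega
  -- Property B: Dominator cannot finish within two moves
  have B : ∀ v : V, ∃ w : V, ¬ DomGame.cn T w ⊆ DomGame.cn T v ∧
      DomGame.cn T v ∪ DomGame.cn T w ≠ Finset.univ := by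
    intro v
    obtain ⟨v0, hv0, heq0, hle0⟩ := DomGame.auxVal_true_eq T hne (k+2)
    have h1 := hle0 v (DomGame.not_cn_subset T (Finset.notMem_empty v))
    rw [hG2, Finset.empty_union] at h1
    have h2 : 2 ≤ DomGame.auxVal T ((k+1)+1) false (DomGame.cn T v) := by
      have : 2 ≤ DomGame.auxVal T (k+2) false (DomGame.cn T v) := by omega
      exact this
    by_contra hw
    push_neg at hw
    have hle1 : DomGame.auxVal T ((k+1)+1) false (DomGame.cn T v) ≤ 1 := by
      refine DomGame.auxVal_false_le T (fun w hwl => ?_)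
      rw [hw w hwl, DomGame.auxVal_univ]
    omega
  -- find a leaf
  obtain ⟨ℓ, s, hsl, hleaf⟩ := tree_exists_leaf T hT (by omega)
  have hls : ℓ ≠ s := hsl.ne'
  have hcnl : ∀ x, x ∈ DomGame.cn T ℓ ↔ (x = ℓ ∨ x = s) := by
    intro x
    rw [DomGame.mem_cn]
    constructor
    · rintro (rfl | h)
      · exact Or.inl rfl
      · exact Or.inr (hleaf x h.symm)
    · rintro (rfl | rfl)
      · exact Or.inl rfl
      · exact Or.inr hsl.symm
  -- the dominating partner of the leaf
  obtain ⟨u, hu⟩ := A ℓ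
  have hout : ∀ x, x ∉ DomGame.cn T u → (x = ℓ ∨ x = s) := by
    intro x hx
    have hxm : x ∈ DomGame.cn T ℓ ∪ DomGame.cn T u := by rw [hu]; exact Finset.mem_univ x
    rcases Finset.mem_union.1 hxm with hx1 | hx2
    · exact (hcnl x).1 hx1
    · exact absurd hx2 hx
  have hus : u ≠ s := by
    rintro rfl
    refine NU u ?_
    apply Finset.eq_univ_iff_forall.2
    intro x
    have hxm : x ∈ DomGame.cn T ℓ ∪ DomGame.cn T u := by rw [hu]; exact Finset.mem_univ x
    rcases Finset.mem_union.1 hxm with hx1 | hx2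
    · rcases (hcnl x).1 hx1 with rfl | rfl
      · exact (DomGame.mem_cn T).2 (Or.inr hsl)
      · exact DomGame.self_mem_cn T _
    · exact hx2
  have hul : u ≠ ℓ := by
    rintro rfl
    refine NU u ?_
    rw [← Finset.union_self (DomGame.cn T u)]
    exact hu
  -- Staller's reply w to Dominator's move u
  obtain ⟨w, hwsub, hwun⟩ := B u
  obtain ⟨y, hyw, hyu⟩ := Finset.not_subset.1 hwsub
  obtain ⟨z, hz⟩ := DomGame.exists_not_mem' hwun
  have hzu : z ∉ DomGame.cn T u := fun h => hz (Finset.mem_union.2 (Or.inl h))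
  have hzw : z ∉ DomGame.cn T w := fun h => hz (Finset.mem_union.2 (Or.inr h))
  have hyz : y ≠ z := fun h => hzw (h ▸ hyw)
  -- identify y = s, z = ℓ
  have hWs : s ∈ DomGame.cn T w ∧ ℓ ∉ DomGame.cn T w ∧ ℓ ∉ DomGame.cn T u ∧
      s ∉ DomGame.cn T u := by
    rcases hout y hyu with hy1 | hy1 <;> rcases hout z hzu with hz1 | hz1
    · exact absurd (hy1.trans hz1.symm) hyz
    · -- y = ℓ, z = s : impossible
      exfalso
      rw [hy1] at hyw
      rw [hz1] at hzw
      rcases (DomGame.mem_cn T).1 hyw with hh | hadj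
      · rw [← hh] at hzw
        exact hzw ((DomGame.mem_cn T).2 (Or.inr hsl.symm))
      · rw [hleaf w hadj] at hzw
        exact hzw (DomGame.self_mem_cn T s)
    · exact ⟨hy1 ▸ hyw, hz1 ▸ hzw, hz1 ▸ hzu, hy1 ▸ hyu⟩
    · exact absurd (hy1.trans hz1.symm) hyz
  obtain ⟨hsw, hlw, hlu, hsu⟩ := hWs
  have hwne_s : w ≠ s := fun h => hlw (h ▸ (DomGame.mem_cn T).2 (Or.inr hsl))
  have hwne_l : w ≠ ℓ := fun h => hlw (h ▸ DomGame.self_mem_cn T ℓ)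
  have hadws : T.Adj w s := by
    rcases (DomGame.mem_cn T).1 hsw with h | h
    · exact absurd h.symm hwne_s
    · exact h
  have hwu : w ≠ u := fun h => hsu (h ▸ hsw)
  have hwmem : w ∈ DomGame.cn T u := by
    by_contra hcon
    rcases hout w hcon with h | h
    · exact hwne_l h
    · exact hwne_s h
  have hadjuw : T.Adj u w := by
    rcases (DomGame.mem_cn T).1 hwmem with h | h
    · exact absurd h hwu
    · exact h
  -- the whole tree is {u, w, s, ℓ}
  obtain ⟨u', hu'⟩ := A w
  have hlu' : ℓ ∈ DomGame.cn T u' := by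
    have hm : ℓ ∈ DomGame.cn T w ∪ DomGame.cn T u' := by rw [hu']; exact Finset.mem_univ ℓ
    rcases Finset.mem_union.1 hm with h | h
    · exact absurd h hlw
    · exact h
  have hu'cases : u' = ℓ ∨ u' = s := by
    rcases (DomGame.mem_cn T).1 hlu' with h | h
    · exact Or.inl h.symm
    · exact Or.inr (hleaf u' h)
  have hV : ∀ x : V, x = u ∨ x = w ∨ x = s ∨ x = ℓ := by
    intro x
    by_contra hx
    push_neg at hx
    obtain ⟨hxu, hxw, hxs, hxl⟩ := hx
    have hxcu : x ∈ DomGame.cn T u := by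
      by_contra hcon
      rcases hout x hcon with h | h
      · exact hxl h
      · exact hxs h
    have hadjux : T.Adj u x := by
      rcases (DomGame.mem_cn T).1 hxcu with h | h
      · exact absurd h hxu
      · exact h
    have hm : x ∈ DomGame.cn T w ∪ DomGame.cn T u' := by rw [hu']; exact Finset.mem_univ x
    rcases Finset.mem_union.1 hm with h | h
    · -- x adjacent to w : triangle u-w-x
      have hadjwx : T.Adj w x := by
        rcases (DomGame.mem_cn T).1 h with h1 | h1
        · exact absurd h1 hxw
        · exact h1
      exact tree_no_triangle hT hadjuw hadjwx hadjux
    · rcases hu'cases with rfl | rfl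
      · rcases (hcnl x).1 h with h1 | h1
        · exact hxl h1
        · exact hxs h1
      · -- x adjacent to s : 4-cycle u-w-s-x
        have hadjsx : T.Adj u' x := by
          rcases (DomGame.mem_cn T).1 h with h1 | h1
          · exact absurd h1 hxs
          · exact h1
        have hune_s : u ≠ u' := fun hh => hsu (hh ▸ DomGame.self_mem_cn T u')
        exact tree_no_c4 hT hune_s (Ne.symm hxw) hadjuw hadws hadjux hadjsx.symm
  -- final contradiction via Property B at w
  obtain ⟨w', hw'sub, hw'un⟩ := B w
  have hlnw' : ℓ ∉ DomGame.cn T w' := by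
    intro hmem
    refine hw'un (Finset.eq_univ_iff_forall.2 fun x => ?_)
    rcases hV x with rfl | rfl | rfl | rfl
    · exact Finset.mem_union.2 (Or.inl ((DomGame.mem_cn T).2 (Or.inr hadjuw.symm)))
    · exact Finset.mem_union.2 (Or.inl (DomGame.self_mem_cn T x))
    · exact Finset.mem_union.2 (Or.inl ((DomGame.mem_cn T).2 (Or.inr hadws)))
    · exact Finset.mem_union.2 (Or.inr hmem)
  have hw'ne_l : w' ≠ ℓ := fun h => hlnw' (h ▸ DomGame.self_mem_cn T ℓ)
  have hw'ne_s : w' ≠ s := fun h => hlnw' (h ▸ (DomGame.mem_cn T).2 (Or.inr hsl))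
  rcases hV w' with rfl | rfl | h | h
  · -- w' = u : but cn u ⊆ cn w
    refine hw'sub fun x hx => ?_
    rcases (DomGame.mem_cn T).1 hx with rfl | h1
    · exact (DomGame.mem_cn T).2 (Or.inr hadjuw.symm)
    · rcases hV x with rfl | rfl | rfl | rfl
      · exact absurd rfl h1.ne'
      · exact DomGame.self_mem_cn T x
      · exact absurd ((DomGame.mem_cn T).2 (Or.inr h1)) hsu
      · exact absurd (hleaf w' h1) hus
  · exact hw'sub (Finset.Subset.refl _)
  · exact hw'ne_s h
  · exact hw'ne_l h
end
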